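/- For all r ∈ ℕ and ε, η > 0 there exists N ∈ ℕ such that the following holds. Suppose n = n_1+⋯+n_r ≥ N and Λ is ε-separated. Let μ be the law of G ∼ G(n⃗,P), and let ν be the law of the edge-union G ∪ G', where G ∼ G(n⃗,P) and G' ∼ G(n⃗,P') are independent and p'_{i,j} = n^{−1.95}·1[λ_{i,j} > 0]; equivalently, ν is the product Bernoulli measure in which each potential edge between V_i and V_j is present independently with probability p_{i,j} + (1 − p_{i,j})·p'_{i,j}. Then the total variation distance between μ and ν is at most η. -/

import Mathlib

open MeasureTheory Matrix

namespace Pandemic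

variable {r : ℕ}

/-- The vertex set: `n i` vertices of each type `i`. -/
abbrev Vert (n : Fin r → ℕ) : Type := (i : Fin r) × Fin (n i)

/-- The largest (real) eigenvalue of a matrix. -/
noncomputable def maxEig (M : Matrix (Fin r) (Fin r) ℝ) : ℝ :=
  sSup {t : ℝ | Module.End.HasEigenvalue (Matrix.toLin' M) t}

/-- `(n_1,…,n_r)` is `A`-balanced if `n i ≤ A * n j` for all `i, j`. -/
def Balanced (A : ℕ) (n : Fin r → ℕ) : Prop := ∀ i j, n i ≤ A * n j

/-- `Λ` is `ε`-separated: every entry is `0` or lies in `[ε, 1/ε]`. -/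
def Separated (ε : ℝ) (Λ : Matrix (Fin r) (Fin r) ℝ) : Prop :=
  ∀ i j, Λ i j = 0 ∨ (ε ≤ Λ i j ∧ Λ i j ≤ 1 / ε)

/-- The graph on types: `i ~ j` iff `Λ i j > 0` (symmetrized). -/
def typeGraph (Λ : Matrix (Fin r) (Fin r) ℝ) : SimpleGraph (Fin r) where
  Adj i j := i ≠ j ∧ (0 < Λ i j ∨ 0 < Λ j i)
  symm := by
    constructor
    intro i j h
    exact ⟨h.1.symm, h.2.symm⟩
  loopless := by constructor; intro i h; exact h.1 rfl

/-- `Λ` is connected if the graph on types with edges at positive entries is connected. -/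
def ConnectedTypes (Λ : Matrix (Fin r) (Fin r) ℝ) : Prop := (typeGraph Λ).Connected

/-- The matrix of infection probabilities `p i j = Λ i j / √(n i * n j)`. -/
noncomputable def pMat (n : Fin r → ℕ) (Λ : Matrix (Fin r) (Fin r) ℝ) :
    Matrix (Fin r) (Fin r) ℝ :=
  fun i j => Λ i j / Real.sqrt ((n i : ℝ) * (n j : ℝ))

/-- The descendants matrix `M i j = p i j * n j`. -/
noncomputable def mMat (n : Fin r → ℕ) (Λ : Matrix (Fin r) (Fin r) ℝ) :
    Matrix (Fin r) (Fin r) ℝ :=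
  fun i j => pMat n Λ i j * (n j : ℝ)

/-- The product Bernoulli measure on edge-indicators: the (unordered) pair `{u, v}`
is an edge independently with probability `p (type u) (type v)`. -/
noncomputable def graphMeasure (n : Fin r → ℕ) (p : Fin r → Fin r → ℝ) :
    Measure (Sym2 (Vert n) → Bool) :=
  Measure.pi fun s =>
    (PMF.bernoulli (min (Real.toNNReal (p (Quot.out s).1.1 (Quot.out s).2.1)) 1)
      (min_le_right _ _)).toMeasure

/-- The graph determined by an edge-indicator function. -/
def graphOf {n : Fin r → ℕ} (ω : Sym2 (Vert n) → Bool) : SimpleGraph (Vert n) where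
  Adj u v := u ≠ v ∧ ω s(u, v) = true
  symm := by
    constructor
    intro u v h
    exact ⟨h.1.symm, by rw [Sym2.eq_swap]; exact h.2⟩
  loopless := by constructor; intro u h; exact h.1 rfl

/-- The number of vertices in the connected component of `v`. -/
noncomputable def compSize {n : Fin r → ℕ} (ω : Sym2 (Vert n) → Bool) (v : Vert n) : ℕ :=
  {u | (graphOf ω).Reachable v u}.ncard

/-- The Euclidean norm on `ℝ^r`. -/
noncomputable def euclNorm (z : Fin r → ℝ) : ℝ := Real.sqrt (∑ i, z i ^ 2)


-- ==================== auxiliary lemmas ====================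

private lemma bc_coord_aux (ρ p δ : ℝ) (hρ : 0 < ρ) (hρp : ρ ≤ p) (hp1 : p ≤ 1)
    (hδ0 : 0 ≤ δ) (hδ1 : δ ≤ 1) :
    1 - (Real.sqrt (p * (p + (1-p)*δ)) + Real.sqrt ((1-p) * (1 - (p + (1-p)*δ)))) ≤
      (δ^2/ρ + δ^2)/2 := by
  set q : ℝ := p + (1-p)*δ with hq
  have hp0 : 0 ≤ p := le_trans hρ.le hρp
  have hpq : p ≤ q := by nlinarith
  have hq1 : q ≤ 1 := by nlinarith
  have hq0 : 0 ≤ q := le_trans hp0 hpq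
  have h1q : 1 - q = (1-p)*(1-δ) := by ring
  rw [Real.sqrt_mul hp0, Real.sqrt_mul (by linarith : (0:ℝ) ≤ 1-p)]
  have sp := Real.sq_sqrt hp0
  have sq' := Real.sq_sqrt hq0
  have sp' := Real.sq_sqrt (by linarith : (0:ℝ) ≤ 1-p)
  have sq1 := Real.sq_sqrt (by linarith : (0:ℝ) ≤ 1-q)
  have ht1 : (Real.sqrt q - Real.sqrt p)^2 ≤ δ^2/ρ := by
    have hge : Real.sqrt p ≤ Real.sqrt q := Real.sqrt_le_sqrt hpq
    have hρs : Real.sqrt ρ ≤ Real.sqrt p := Real.sqrt_le_sqrt hρp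
    have hρs0 : 0 < Real.sqrt ρ := Real.sqrt_pos.2 hρ
    have key : (Real.sqrt q - Real.sqrt p) * Real.sqrt ρ ≤ δ := by
      have h4 : (Real.sqrt q - Real.sqrt p) * (Real.sqrt q + Real.sqrt p) = q - p := by
        nlinarith [sp, sq']
      nlinarith [Real.sqrt_nonneg q, Real.sqrt_nonneg p]
    have h2 : (Real.sqrt q - Real.sqrt p) ≤ δ / Real.sqrt ρ := by
      rw [le_div_iff₀ hρs0]; exact key
    have h3 : (Real.sqrt q - Real.sqrt p)^2 ≤ (δ / Real.sqrt ρ)^2 := by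
      have hdnn : 0 ≤ δ / Real.sqrt ρ := div_nonneg hδ0 hρs0.le
      apply sq_le_sq' (by linarith) h2
    calc (Real.sqrt q - Real.sqrt p)^2 ≤ (δ / Real.sqrt ρ)^2 := h3
      _ = δ^2 / ρ := by rw [div_pow, Real.sq_sqrt hρ.le]
  have ht2 : (Real.sqrt (1-p) - Real.sqrt (1-q))^2 ≤ δ^2 := by
    have e : Real.sqrt (1-q) = Real.sqrt (1-p) * Real.sqrt (1-δ) := by
      rw [h1q, Real.sqrt_mul (by linarith)]
    have hδs : 1 - δ ≤ Real.sqrt (1-δ) := by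
      rcases le_or_gt (1-δ) 0 with h | h
      · exact le_trans h (Real.sqrt_nonneg _)
      · rw [Real.le_sqrt h.le (by linarith)]; nlinarith
    have hδs1 : Real.sqrt (1-δ) ≤ 1 := Real.sqrt_le_one.2 (by linarith)
    have h01 : Real.sqrt (1-p) ≤ 1 := Real.sqrt_le_one.2 (by linarith)
    have hd : Real.sqrt (1-p) - Real.sqrt (1-q) = Real.sqrt (1-p) * (1 - Real.sqrt (1-δ)) := by
      rw [e]; ring
    have hnn : 0 ≤ Real.sqrt (1-p) := Real.sqrt_nonneg _
    have hub : Real.sqrt (1-p) - Real.sqrt (1-q) ≤ δ := by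
      rw [hd]; nlinarith
    have hlb : 0 ≤ Real.sqrt (1-p) - Real.sqrt (1-q) := by
      rw [hd]; nlinarith
    nlinarith
  have e1 : (Real.sqrt q - Real.sqrt p)^2 = q + p - 2*(Real.sqrt p * Real.sqrt q) := by
    rw [sub_sq, sp, sq']; ring
  have e2 : (Real.sqrt (1-p) - Real.sqrt (1-q))^2
      = (1-p) + (1-q) - 2*(Real.sqrt (1-p) * Real.sqrt (1-q)) := by
    rw [sub_sq, sp', sq1]; ring
  rw [e1] at ht1; rw [e2] at ht2
  linarith

private lemma weier_aux {ι : Type*} (s : Finset ι) (a : ι → ℝ) (h0 : ∀ i ∈ s, 0 ≤ a i)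
    (h1 : ∀ i ∈ s, a i ≤ 1) : 1 - ∑ i ∈ s, (1 - a i) ≤ ∏ i ∈ s, a i := by
  induction s using Finset.cons_induction with
  | empty => simp
  | cons i s hi ih =>
    rw [Finset.prod_cons, Finset.sum_cons]
    have h0i := h0 i (Finset.mem_cons_self i s)
    have h1i := h1 i (Finset.mem_cons_self i s)
    have ih' := ih (fun j hj => h0 j (Finset.mem_cons_of_mem hj))
      (fun j hj => h1 j (Finset.mem_cons_of_mem hj))
    have hsum : 0 ≤ ∑ j ∈ s, (1 - a j) :=
      Finset.sum_nonneg fun j hj => by linarith [h1 j (Finset.mem_cons_of_mem hj)]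
    nlinarith [mul_le_mul_of_nonneg_left ih' h0i]

private lemma sqrt_finset_prod_aux {ι : Type*} (s : Finset ι) (h : ι → ℝ)
    (hh : ∀ i ∈ s, 0 ≤ h i) :
    Real.sqrt (∏ i ∈ s, h i) = ∏ i ∈ s, Real.sqrt (h i) := by
  induction s using Finset.cons_induction with
  | empty => simp
  | cons i s hi ih =>
    rw [Finset.prod_cons, Finset.prod_cons,
      Real.sqrt_mul (hh i (Finset.mem_cons_self i s)),
      ih (fun j hj => hh j (Finset.mem_cons_of_mem hj))]

private lemma bc_key_aux {ι : Type*} [Fintype ι] [DecidableEq ι] (p q : ι → ℝ)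
    (hp0 : ∀ s, 0 ≤ p s) (hp1 : ∀ s, p s ≤ 1) (hq0 : ∀ s, 0 ≤ q s) (hq1 : ∀ s, q s ≤ 1)
    (c : ℝ) (hc : 0 ≤ c)
    (hB : ∀ s, 1 - (Real.sqrt (p s * q s) + Real.sqrt ((1 - p s) * (1 - q s))) ≤ c) :
    ∑ ω : ι → Bool,
        |(∏ s, (bif ω s then p s else 1 - p s)) - (∏ s, (bif ω s then q s else 1 - q s))|
      ≤ 2 * Real.sqrt (2 * (Fintype.card ι) * c) := by
  classical
  set f : ι → Bool → ℝ := fun s b => bif b then p s else 1 - p s with hf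
  set g : ι → Bool → ℝ := fun s b => bif b then q s else 1 - q s with hg
  have hf0 : ∀ s b, 0 ≤ f s b := by intro s b; cases b <;> simp [hf] <;> linarith [hp1 s, hp0 s]
  have hg0 : ∀ s b, 0 ≤ g s b := by intro s b; cases b <;> simp [hg] <;> linarith [hq1 s, hq0 s]
  set F : (ι → Bool) → ℝ := fun ω => ∏ s, f s (ω s) with hF
  set G : (ι → Bool) → ℝ := fun ω => ∏ s, g s (ω s) with hG
  have hF0 : ∀ ω, 0 ≤ F ω := fun ω => Finset.prod_nonneg fun s _ => hf0 s (ω s)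
  have hG0 : ∀ ω, 0 ≤ G ω := fun ω => Finset.prod_nonneg fun s _ => hg0 s (ω s)
  have hFsum : ∑ ω : ι → Bool, F ω = 1 := by
    rw [hF, ← Fintype.prod_sum]; simp [hf]
  have hGsum : ∑ ω : ι → Bool, G ω = 1 := by
    rw [hG, ← Fintype.prod_sum]; simp [hg]
  set B : ι → ℝ := fun s => Real.sqrt (p s * q s) + Real.sqrt ((1 - p s) * (1 - q s)) with hBdef
  have hsqrtFG : ∀ ω : ι → Bool,
      Real.sqrt (F ω) * Real.sqrt (G ω) = ∏ s, Real.sqrt (f s (ω s) * g s (ω s)) := by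
    intro ω
    rw [← Real.sqrt_mul (hF0 ω), hF, hG]
    simp only []
    rw [← Finset.prod_mul_distrib]
    exact sqrt_finset_prod_aux _ _ fun s _ => mul_nonneg (hf0 s (ω s)) (hg0 s (ω s))
  have hBCsum : ∑ ω : ι → Bool, Real.sqrt (F ω) * Real.sqrt (G ω) = ∏ s, B s := by
    have swap := Fintype.prod_sum (R := ℝ) (κ := fun _ : ι => Bool)
      (fun s b => Real.sqrt (f s b * g s b))
    rw [Finset.sum_congr rfl fun ω _ => hsqrtFG ω, ← swap]
    apply Finset.prod_congr rfl
    intro s _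
    rw [Fintype.sum_bool]
    simp [hf, hg, hBdef]
  have hB1 : ∀ s, B s ≤ 1 := by
    intro s
    have h1 : Real.sqrt (p s * q s) ≤ (p s + q s)/2 := by
      rw [show (p s + q s)/2 = Real.sqrt (((p s + q s)/2)^2) from
        (Real.sqrt_sq (by linarith [hp0 s, hq0 s])).symm]
      apply Real.sqrt_le_sqrt; nlinarith [sq_nonneg (p s - q s)]
    have h2 : Real.sqrt ((1 - p s) * (1 - q s)) ≤ ((1 - p s) + (1 - q s))/2 := by
      rw [show ((1 - p s) + (1 - q s))/2 = Real.sqrt ((((1 - p s) + (1 - q s))/2)^2) from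
        (Real.sqrt_sq (by linarith [hp1 s, hq1 s])).symm]
      apply Real.sqrt_le_sqrt; nlinarith [sq_nonneg (p s - q s)]
    simp only [hBdef]; linarith
  have hB0 : ∀ s, 0 ≤ B s := fun s =>
    add_nonneg (Real.sqrt_nonneg _) (Real.sqrt_nonneg _)
  have hprodB : 1 - (Fintype.card ι) * c ≤ ∏ s, B s := by
    have := weier_aux Finset.univ B (fun i _ => hB0 i) (fun i _ => hB1 i)
    have hs : ∑ i, (1 - B i) ≤ (Fintype.card ι) * c := by
      calc ∑ i, (1 - B i) ≤ ∑ _i : ι, c := Finset.sum_le_sum fun i _ => hB i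
        _ = (Fintype.card ι) * c := by rw [Finset.sum_const, nsmul_eq_mul, Fintype.card]
    linarith
  set u : (ι → Bool) → ℝ := fun ω => Real.sqrt (F ω) - Real.sqrt (G ω) with hu
  set v : (ι → Bool) → ℝ := fun ω => Real.sqrt (F ω) + Real.sqrt (G ω) with hv
  have habs : ∀ ω, |F ω - G ω| = |u ω| * v ω := by
    intro ω
    have e : F ω - G ω = u ω * v ω := by
      simp only [hu, hv]
      nlinarith [Real.sq_sqrt (hF0 ω), Real.sq_sqrt (hG0 ω)]
    rw [e, abs_mul, abs_of_nonneg (by positivity : (0:ℝ) ≤ v ω)]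
  have hsum_u2 : ∑ ω : ι → Bool, (|u ω|)^2 = 2 - 2 * ∏ s, B s := by
    have hptw : ∀ ω : ι → Bool,
        (|u ω|)^2 = F ω + G ω - 2 * (Real.sqrt (F ω) * Real.sqrt (G ω)) := by
      intro ω
      rw [sq_abs, hu]
      simp only []
      nlinarith [Real.sq_sqrt (hF0 ω), Real.sq_sqrt (hG0 ω)]
    rw [Finset.sum_congr rfl fun ω _ => hptw ω]
    rw [Finset.sum_sub_distrib, Finset.sum_add_distrib, hFsum, hGsum, ← Finset.mul_sum, hBCsum]
    ring
  have hsum_v2 : ∑ ω : ι → Bool, (v ω)^2 ≤ 4 := by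
    have hpt : ∀ ω : ι → Bool, (v ω)^2 ≤ 2 * (F ω + G ω) := by
      intro ω
      simp only [hv]
      nlinarith [Real.sq_sqrt (hF0 ω), Real.sq_sqrt (hG0 ω),
        sq_nonneg (Real.sqrt (F ω) - Real.sqrt (G ω))]
    calc ∑ ω : ι → Bool, (v ω)^2 ≤ ∑ ω : ι → Bool, 2 * (F ω + G ω) :=
          Finset.sum_le_sum fun ω _ => hpt ω
      _ = 4 := by rw [← Finset.mul_sum, Finset.sum_add_distrib, hFsum, hGsum]; norm_num
  have hCS := Finset.sum_mul_sq_le_sq_mul_sq Finset.univ (fun ω => |u ω|) v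
  have hsumnn : 0 ≤ ∑ ω : ι → Bool, |u ω| * v ω :=
    Finset.sum_nonneg fun ω _ => mul_nonneg (abs_nonneg _) (by positivity)
  have hS1 : ∑ ω : ι → Bool, (|u ω|)^2 ≤ 2 * (Fintype.card ι) * c := by
    rw [hsum_u2]; linarith
  have hfinal : ∑ ω : ι → Bool, |u ω| * v ω ≤ 2 * Real.sqrt (2 * (Fintype.card ι) * c) := by
    have h1 : (∑ ω : ι → Bool, |u ω| * v ω)^2 ≤ (2 * (Fintype.card ι) * c) * 4 := by
      calc (∑ ω : ι → Bool, |u ω| * v ω)^2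
          ≤ (∑ ω : ι → Bool, (|u ω|)^2) * ∑ ω : ι → Bool, (v ω)^2 := hCS
        _ ≤ (2 * (Fintype.card ι) * c) * 4 := by
            apply mul_le_mul hS1 hsum_v2 (Finset.sum_nonneg fun ω _ => sq_nonneg _)
            positivity
    have h2 : ∑ ω : ι → Bool, |u ω| * v ω ≤ Real.sqrt ((2 * (Fintype.card ι) * c) * 4) := by
      rw [show ∑ ω : ι → Bool, |u ω| * v ω
        = Real.sqrt ((∑ ω : ι → Bool, |u ω| * v ω)^2) from (Real.sqrt_sq hsumnn).symm]
      exact Real.sqrt_le_sqrt h1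
    calc ∑ ω : ι → Bool, |u ω| * v ω ≤ Real.sqrt ((2 * (Fintype.card ι) * c) * 4) := h2
      _ = 2 * Real.sqrt (2 * (Fintype.card ι) * c) := by
          rw [Real.sqrt_mul (by positivity), show Real.sqrt 4 = 2 by
            rw [show (4:ℝ) = 2^2 by norm_num, Real.sqrt_sq (by norm_num)]]
          ring
  calc ∑ ω : ι → Bool, |F ω - G ω| = ∑ ω : ι → Bool, |u ω| * v ω :=
        Finset.sum_congr rfl fun ω _ => habs ω
    _ ≤ 2 * Real.sqrt (2 * (Fintype.card ι) * c) := hfinal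

private lemma pi_bern_apply_aux {ι : Type*} [Fintype ι] (θ : ι → ℝ)
    (h0 : ∀ s, 0 ≤ θ s) (h1 : ∀ s, θ s ≤ 1) (E : Set (ι → Bool)) :
    ((Measure.pi fun s =>
        (PMF.bernoulli (min (Real.toNNReal (θ s)) 1) (min_le_right _ _)).toMeasure) E).toReal
      = ∑ ω ∈ (Set.toFinite E).toFinset, ∏ s, (bif ω s then θ s else 1 - θ s) := by
  classical
  set μ := (Measure.pi fun s =>
    (PMF.bernoulli (min (Real.toNNReal (θ s)) 1) (min_le_right _ _)).toMeasure) with hμ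
  have hmin : ∀ s, min (Real.toNNReal (θ s)) 1 = Real.toNNReal (θ s) := fun s =>
    min_eq_left (Real.toNNReal_le_one.2 (h1 s))
  have hsing : ∀ ω : ι → Bool, μ {ω} = ∏ s, ENNReal.ofReal (bif ω s then θ s else 1 - θ s) := by
    intro ω
    rw [← Set.univ_pi_singleton ω, hμ, Measure.pi_pi]
    apply Finset.prod_congr rfl
    intro s _
    rw [PMF.toMeasure_apply_singleton _ _ (measurableSet_singleton _), PMF.bernoulli_apply,
      hmin s]
    cases h : ω s
    · simp only [Bool.cond_false]
      rw [ENNReal.coe_sub, ENNReal.coe_one]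
      show (1:ENNReal) - ENNReal.ofReal (θ s) = _
      rw [← ENNReal.ofReal_one, ← ENNReal.ofReal_sub _ (h0 s)]
    · simp only [Bool.cond_true]
      rfl
  have hEeq : E = ⋃ ω ∈ (Set.toFinite E).toFinset, {ω} := by
    ext x
    simp only [Set.mem_iUnion, Set.Finite.mem_toFinset, Set.mem_singleton_iff]
    exact ⟨fun h => ⟨x, h, rfl⟩, fun ⟨y, hy, hxy⟩ => hxy ▸ hy⟩
  have hsum : μ E = ∑ ω ∈ (Set.toFinite E).toFinset, μ {ω} := by
    conv_lhs => rw [hEeq]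
    exact measure_biUnion_finset
      (fun a _ b _ hab => by simp [Set.disjoint_singleton, hab])
      (fun b _ => measurableSet_singleton b)
  rw [hsum, ENNReal.toReal_sum (fun ω _ => by
    rw [hsing ω]; exact ENNReal.prod_ne_top fun s _ => ENNReal.ofReal_ne_top)]
  apply Finset.sum_congr rfl
  intro ω _
  rw [hsing ω, ENNReal.toReal_prod]
  apply Finset.prod_congr rfl
  intro s _
  rw [ENNReal.toReal_ofReal]
  cases h : ω s
  · simp only [Bool.cond_false]; linarith [h1 s]
  · simp only [Bool.cond_true]; exact h0 s

private lemma tv_bound_aux {ι : Type*} [Fintype ι] [DecidableEq ι] (θ₁ θ₂ : ι → ℝ)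
    (hp0 : ∀ s, 0 ≤ θ₁ s) (hp1 : ∀ s, θ₁ s ≤ 1) (hq0 : ∀ s, 0 ≤ θ₂ s) (hq1 : ∀ s, θ₂ s ≤ 1)
    (c : ℝ) (hc : 0 ≤ c)
    (hB : ∀ s, 1 - (Real.sqrt (θ₁ s * θ₂ s) + Real.sqrt ((1 - θ₁ s) * (1 - θ₂ s))) ≤ c)
    (E : Set (ι → Bool)) :
    |((Measure.pi fun s =>
        (PMF.bernoulli (min (Real.toNNReal (θ₁ s)) 1) (min_le_right _ _)).toMeasure) E).toReal -
      ((Measure.pi fun s =>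
        (PMF.bernoulli (min (Real.toNNReal (θ₂ s)) 1) (min_le_right _ _)).toMeasure) E).toReal|
      ≤ 2 * Real.sqrt (2 * (Fintype.card ι) * c) := by
  classical
  rw [pi_bern_apply_aux θ₁ hp0 hp1 E, pi_bern_apply_aux θ₂ hq0 hq1 E, ← Finset.sum_sub_distrib]
  calc |∑ ω ∈ (Set.toFinite E).toFinset,
        ((∏ s, (bif ω s then θ₁ s else 1 - θ₁ s)) - ∏ s, (bif ω s then θ₂ s else 1 - θ₂ s))|
      ≤ ∑ ω ∈ (Set.toFinite E).toFinset,
        |(∏ s, (bif ω s then θ₁ s else 1 - θ₁ s)) - ∏ s, (bif ω s then θ₂ s else 1 - θ₂ s)| :=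
        Finset.abs_sum_le_sum_abs _ _
    _ ≤ ∑ ω : ι → Bool,
        |(∏ s, (bif ω s then θ₁ s else 1 - θ₁ s)) - ∏ s, (bif ω s then θ₂ s else 1 - θ₂ s)| :=
        Finset.sum_le_sum_of_subset_of_nonneg (Finset.subset_univ _)
          (fun ω _ _ => abs_nonneg _)
    _ ≤ 2 * Real.sqrt (2 * (Fintype.card ι) * c) :=
        bc_key_aux θ₁ θ₂ hp0 hp1 hq0 hq1 c hc hB


/-- the total variation distance between the law of `G ∼ G(n⃗, P)` and the
law of `G ∪ G'` (equivalently, the product Bernoulli measure with parameters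
`p_{ij} + (1 - p_{ij})·p'_{ij}` where `p'_{ij} = n^{-1.95}·1[λ_{ij} > 0]`) is at most
`η`. -/
theorem sprinkling_total_variation (r : ℕ) (ε η : ℝ) (hε : 0 < ε) (hη : 0 < η) :
    ∃ N : ℕ, ∀ (n : Fin r → ℕ) (Λ : Matrix (Fin r) (Fin r) ℝ),
      (∀ i, 0 < n i) → Λ.IsSymm → (∀ i j, 0 ≤ Λ i j) →
      (∀ i j, pMat n Λ i j ≤ 1) →
      N ≤ ∑ l, n l → Separated ε Λ →
      ∀ E : Set (Sym2 (Vert n) → Bool), MeasurableSet E →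
        |(graphMeasure n (pMat n Λ) E).toReal -
          (graphMeasure n
            (fun a b => pMat n Λ a b + (1 - pMat n Λ a b) *
              (if 0 < Λ a b then ((∑ l, n l : ℕ) : ℝ) ^ (-(1.95 : ℝ)) else 0))
            E).toReal| ≤ η := by
  classical
  -- choose N
  have hg : Filter.Tendsto
      (fun k : ℕ => 2 * Real.sqrt (((k:ℝ) ^ (-(0.9:ℝ)))/ε + (k:ℝ) ^ (-(1.9:ℝ))))
      Filter.atTop (nhds 0) := by
    have h1 : Filter.Tendsto (fun x : ℝ => x ^ (-(0.9:ℝ))) Filter.atTop (nhds 0) :=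
      tendsto_rpow_neg_atTop (by norm_num)
    have h2 : Filter.Tendsto (fun x : ℝ => x ^ (-(1.9:ℝ))) Filter.atTop (nhds 0) :=
      tendsto_rpow_neg_atTop (by norm_num)
    have hnat : Filter.Tendsto (fun k : ℕ => (k:ℝ)) Filter.atTop Filter.atTop :=
      tendsto_natCast_atTop_atTop
    have hsum : Filter.Tendsto
        (fun k : ℕ => ((k:ℝ) ^ (-(0.9:ℝ)))/ε + (k:ℝ) ^ (-(1.9:ℝ)))
        Filter.atTop (nhds ((0:ℝ)/ε + 0)) :=
      (((h1.comp hnat).div_const ε).add (h2.comp hnat))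
    rw [show (0:ℝ)/ε + 0 = 0 by simp] at hsum
    have hsqrt := (Real.continuous_sqrt.tendsto 0).comp hsum
    rw [Real.sqrt_zero] at hsqrt
    have := hsqrt.const_mul (2:ℝ)
    simpa using this
  obtain ⟨N, hN⟩ := Filter.eventually_atTop.1
    ((hg.eventually (gt_mem_nhds hη)).and (Filter.eventually_ge_atTop 1))
  refine ⟨N, ?_⟩
  intro n Λ hn hsym hΛ0 hple hNle hsep E _hE
  obtain ⟨hφ, h1n⟩ := hN (∑ l, n l) hNle
  set x : ℝ := ((∑ l, n l : ℕ) : ℝ) with hxdef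
  have hx1 : (1:ℝ) ≤ x := by rw [hxdef]; exact_mod_cast h1n
  have hx0 : (0:ℝ) < x := lt_of_lt_of_le one_pos hx1
  set δ : ℝ := x ^ (-(1.95:ℝ)) with hδdef
  have hδ0 : 0 ≤ δ := Real.rpow_nonneg hx0.le _
  have hδ1 : δ ≤ 1 := Real.rpow_le_one_of_one_le_of_nonpos hx1 (by norm_num)
  set θ₁ : Sym2 (Vert n) → ℝ :=
    fun s => pMat n Λ (Quot.out s).1.1 (Quot.out s).2.1 with hθ₁
  set θ₂ : Sym2 (Vert n) → ℝ := fun s => θ₁ s + (1 - θ₁ s) *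
    (if 0 < Λ (Quot.out s).1.1 (Quot.out s).2.1 then x ^ (-(1.95:ℝ)) else 0) with hθ₂
  have hp0 : ∀ s, 0 ≤ θ₁ s := fun s =>
    div_nonneg (hΛ0 _ _) (Real.sqrt_nonneg _)
  have hp1 : ∀ s, θ₁ s ≤ 1 := fun s => hple _ _
  have htfact : ∀ s : Sym2 (Vert n),
      0 ≤ (if 0 < Λ (Quot.out s).1.1 (Quot.out s).2.1 then x ^ (-(1.95:ℝ)) else 0) ∧
      (if 0 < Λ (Quot.out s).1.1 (Quot.out s).2.1 then x ^ (-(1.95:ℝ)) else 0) ≤ 1 := by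
    intro s
    split
    · exact ⟨hδ0, hδ1⟩
    · norm_num
  have hq0 : ∀ s, 0 ≤ θ₂ s := by
    intro s
    obtain ⟨ht0, ht1⟩ := htfact s
    have := hp0 s; have := hp1 s
    simp only [hθ₂]
    nlinarith
  have hq1 : ∀ s, θ₂ s ≤ 1 := by
    intro s
    obtain ⟨ht0, ht1⟩ := htfact s
    have := hp0 s; have := hp1 s
    simp only [hθ₂]
    nlinarith
  set c : ℝ := (δ^2/(ε/x) + δ^2)/2 with hcdef
  have hρ : 0 < ε / x := div_pos hε hx0
  have hc : 0 ≤ c := by positivity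
  have hB : ∀ s : Sym2 (Vert n),
      1 - (Real.sqrt (θ₁ s * θ₂ s) + Real.sqrt ((1 - θ₁ s) * (1 - θ₂ s))) ≤ c := by
    intro s
    set i := (Quot.out s).1.1 with hi
    set j := (Quot.out s).2.1 with hj
    rcases hsep i j with h0 | ⟨hεle, _⟩
    · have hif : (if 0 < Λ i j then x ^ (-(1.95:ℝ)) else 0) = 0 := by
        rw [if_neg]; rw [h0]; exact lt_irrefl 0
      have hq : θ₂ s = θ₁ s := by simp only [hθ₂, ← hi, ← hj, hif]; ring
      rw [hq, Real.sqrt_mul_self (hp0 s),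
        Real.sqrt_mul_self (by linarith [hp1 s] : (0:ℝ) ≤ 1 - θ₁ s)]
      have : 1 - (θ₁ s + (1 - θ₁ s)) = 0 := by ring
      rw [this]
      exact hc
    · have hΛpos : 0 < Λ i j := lt_of_lt_of_le hε hεle
      have hif : (if 0 < Λ i j then x ^ (-(1.95:ℝ)) else 0) = δ := if_pos hΛpos
      have hq : θ₂ s = θ₁ s + (1 - θ₁ s) * δ := by
        simp only [hθ₂, ← hi, ← hj, hif]
      -- lower bound on p
      have hni : (1:ℝ) ≤ (n i : ℝ) := by exact_mod_cast hn i
      have hnj : (1:ℝ) ≤ (n j : ℝ) := by exact_mod_cast hn j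
      have hsq_pos : 0 < Real.sqrt ((n i : ℝ) * (n j : ℝ)) :=
        Real.sqrt_pos.2 (by nlinarith)
      have hle_i : (n i : ℝ) ≤ x := by
        rw [hxdef]
        exact_mod_cast Finset.single_le_sum (f := fun l => n l)
          (fun l _ => Nat.zero_le _) (Finset.mem_univ i)
      have hle_j : (n j : ℝ) ≤ x := by
        rw [hxdef]
        exact_mod_cast Finset.single_le_sum (f := fun l => n l)
          (fun l _ => Nat.zero_le _) (Finset.mem_univ j)
      have hsq_le : Real.sqrt ((n i : ℝ) * (n j : ℝ)) ≤ x := by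
        rw [show x = Real.sqrt (x * x) from (Real.sqrt_mul_self hx0.le).symm]
        apply Real.sqrt_le_sqrt
        nlinarith
      have hρp : ε / x ≤ θ₁ s := by
        have : ε / x ≤ Λ i j / Real.sqrt ((n i : ℝ) * (n j : ℝ)) :=
          div_le_div₀ (hΛ0 i j) hεle hsq_pos hsq_le
        simpa only [hθ₁, pMat, ← hi, ← hj] using this
      have := bc_coord_aux (ε/x) (θ₁ s) δ hρ hρp (hp1 s) hδ0 hδ1
      rw [hq]
      exact this
  -- apply the tv bound
  have hmain := tv_bound_aux θ₁ θ₂ hp0 hp1 hq0 hq1 c hc hB E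
  have hfirst : graphMeasure n (pMat n Λ) =
      (Measure.pi fun s =>
        (PMF.bernoulli (min (Real.toNNReal (θ₁ s)) 1) (min_le_right _ _)).toMeasure) := rfl
  have hsecond : graphMeasure n
      (fun a b => pMat n Λ a b + (1 - pMat n Λ a b) *
        (if 0 < Λ a b then ((∑ l, n l : ℕ) : ℝ) ^ (-(1.95 : ℝ)) else 0)) =
      (Measure.pi fun s =>
        (PMF.bernoulli (min (Real.toNNReal (θ₂ s)) 1) (min_le_right _ _)).toMeasure) := rfl
  rw [hfirst, hsecond]
  -- cardinality bound
  set M : ℕ := Fintype.card (Sym2 (Vert n)) with hMdef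
  have hMle : (M:ℝ) ≤ x^2 := by
    have hinj : Function.Injective (fun s : Sym2 (Vert n) => Quot.out s) := by
      intro a b h
      rw [← Quot.out_eq a, ← Quot.out_eq b]
      exact congrArg _ h
    have h1 : M ≤ Fintype.card (Vert n × Vert n) := Fintype.card_le_of_injective _ hinj
    have h2 : Fintype.card (Vert n × Vert n) = (∑ l, n l) * (∑ l, n l) := by
      rw [Fintype.card_prod]
      congr 1 <;> · rw [Fintype.card_sigma]; simp
    have : (M:ℝ) ≤ ((∑ l, n l : ℕ) : ℝ) * ((∑ l, n l : ℕ) : ℝ) := by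
      have := h2 ▸ h1
      exact_mod_cast this
    calc (M:ℝ) ≤ x * x := this
      _ = x^2 := (sq x).symm
  -- arithmetic: 2 * M * c ≤ x^{-0.9}/ε + x^{-1.9}
  have hδsq : δ^2 = x ^ (-(3.9:ℝ)) := by
    rw [hδdef, ← Real.rpow_natCast (x ^ (-(1.95:ℝ))) 2, ← Real.rpow_mul hx0.le]
    norm_num
  have p2 : x^2 * x ^ (-(3.9:ℝ)) = x ^ (-(1.9:ℝ)) := by
    rw [← Real.rpow_natCast x 2, ← Real.rpow_add hx0]
    norm_num
  have p1 : x ^ (-(1.9:ℝ)) * x = x ^ (-(0.9:ℝ)) := by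
    calc x ^ (-(1.9:ℝ)) * x = x ^ (-(1.9:ℝ)) * x ^ (1:ℝ) := by rw [Real.rpow_one]
      _ = x ^ (-(1.9:ℝ) + 1) := (Real.rpow_add hx0 _ _).symm
      _ = x ^ (-(0.9:ℝ)) := by norm_num
  have harith : 2 * (M:ℝ) * c ≤ x ^ (-(0.9:ℝ))/ε + x ^ (-(1.9:ℝ)) := by
    have hcval : c = (δ^2 * x / ε + δ^2)/2 := by
      rw [hcdef, div_div_eq_mul_div]
    have step1 : 2 * (M:ℝ) * c = (M:ℝ) * (δ^2 * x / ε + δ^2) := by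
      rw [hcval]; ring
    have step2 : (M:ℝ) * (δ^2 * x / ε + δ^2) ≤ x^2 * (δ^2 * x / ε + δ^2) := by
      apply mul_le_mul_of_nonneg_right hMle
      positivity
    have step3 : x^2 * (δ^2 * x / ε + δ^2) = x ^ (-(0.9:ℝ))/ε + x ^ (-(1.9:ℝ)) := by
      rw [hδsq, mul_add, p2,
        show x^2 * (x ^ (-(3.9:ℝ)) * x / ε) = (x^2 * x ^ (-(3.9:ℝ))) * x / ε by ring,
        p2, p1]
    rw [step1, ← step3]
    exact step2
  have hsqrtle : Real.sqrt (2 * (M:ℝ) * c) ≤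
      Real.sqrt (x ^ (-(0.9:ℝ))/ε + x ^ (-(1.9:ℝ))) := Real.sqrt_le_sqrt harith
  calc |((Measure.pi fun s =>
        (PMF.bernoulli (min (Real.toNNReal (θ₁ s)) 1) (min_le_right _ _)).toMeasure) E).toReal -
      ((Measure.pi fun s =>
        (PMF.bernoulli (min (Real.toNNReal (θ₂ s)) 1) (min_le_right _ _)).toMeasure) E).toReal|
      ≤ 2 * Real.sqrt (2 * (M:ℝ) * c) := hmain
    _ ≤ 2 * Real.sqrt (x ^ (-(0.9:ℝ))/ε + x ^ (-(1.9:ℝ))) := by linarith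
    _ ≤ η := le_of_lt hφ

end Pandemic
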